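/- For the grow-until-dominated leader election algorithm on an $n$-node cycle with distinct identifiers, the sum of all nodes' running times is at most $\lceil n/2 \rceil + a(n-1)$ where $a$ satisfies the recurrence $a(p)=\max_{1\le k\le\lceil p/2\rceil}\{k+a(k-1)+a(p-k)\}$, $a(0)=0$, $a(1)=1$; since $a(m) = O(m \log m)$, the node-averaged running time is $O(\log n)$. -/

import Mathlib

/-- Running time of node `v` on the `n`-cycle under the grow-until-dominated algorithm:
the least radius `k` at which `v` either sees a larger identifier or sees the whole
cycle (`k ≥ ⌈n/2⌉`). -/
noncomputable def cycleRuntime (n : ℕ) (I : Fin n → ℕ) (v : Fin n) : ℕ :=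
  sInf {k | (∃ u, (SimpleGraph.cycleGraph n).dist v u ≤ k ∧ I v < I u) ∨ (n + 1) / 2 ≤ k}

open Fin.CommRing

lemma cyc_walk (n : ℕ) [NeZero n] (hn : 2 ≤ n) (v : Fin n) (k : ℕ) :
    ∃ p : (SimpleGraph.cycleGraph n).Walk v (v + (k : Fin n)), p.length ≤ k := by
  induction k with
  | zero => exact ⟨SimpleGraph.Walk.nil.copy rfl (by simp), by simp⟩
  | succ k ihk =>
    obtain ⟨p, hp⟩ := ihk
    have hadj : (SimpleGraph.cycleGraph n).Adj (v + (k : Fin n)) (v + ((k+1 : ℕ) : Fin n)) := by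
      rw [SimpleGraph.cycleGraph_adj']
      right
      have : (v + ((k+1 : ℕ) : Fin n)) - (v + (k : Fin n)) = ((1:ℕ) : Fin n) := by
        push_cast; ring
      rw [this]
      exact Fin.val_cast_of_lt hn
    exact ⟨p.concat hadj, by simp [SimpleGraph.Walk.length_concat]; omega⟩

lemma cyc_dist_add_le (n : ℕ) [NeZero n] (hn : 2 ≤ n) (v : Fin n) (k : ℕ) :
    (SimpleGraph.cycleGraph n).dist v (v + (k : Fin n)) ≤ k := by
  obtain ⟨p, hp⟩ := cyc_walk n hn v k
  exact le_trans (SimpleGraph.dist_le p) hp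

/-- Key combinatorial lemma: on a "path" `(lo, hi)` with sentinels at the ends, any
running-time function `r` bounded by the distance to either sentinel and by the distance
to any element with a larger value has total sum at most `a (hi - lo - 1)`. -/
lemma path_sum (a : ℕ → ℕ) (ha1 : a 1 = 1)
    (harec : ∀ p, 2 ≤ p →
      a p = (Finset.Icc 1 ((p + 1) / 2)).sup (fun k => k + a (k - 1) + a (p - k))) :
    ∀ p lo hi, hi = lo + p + 1 → ∀ f r : ℕ → ℕ,
      Set.InjOn f (Set.Ioo lo hi) →
      (∀ i, lo < i → i < hi → r i ≤ i - lo) →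
      (∀ i, lo < i → i < hi → r i ≤ hi - i) →
      (∀ i j, lo < i → i < hi → lo < j → j < hi → f i < f j → r i ≤ Nat.dist i j) →
      ∑ i ∈ Finset.Ioo lo hi, r i ≤ a p := by
  intro p
  induction p using Nat.strong_induction_on with
  | _ p ih =>
    intro lo hi hhi f r hinj h1 h2 h3
    rcases p with _ | _ | q
    · have : Finset.Ioo lo hi = ∅ := by
        apply Finset.eq_empty_of_forall_notMem; intro x; simp [Finset.mem_Ioo]; omega
      simp [this]
    · have : Finset.Ioo lo hi = {lo + 1} := by
        ext x; simp [Finset.mem_Ioo]; omega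
      rw [this, Finset.sum_singleton, ha1]
      have := h1 (lo + 1) (by omega) (by omega)
      omega
    · set p := q + 2 with hp
      obtain ⟨t, ht, htmax⟩ := Finset.exists_max_image (Finset.Ioo lo hi) f
        ⟨lo + 1, by simp [Finset.mem_Ioo]; omega⟩
      rw [Finset.mem_Ioo] at ht
      obtain ⟨hlt, hth⟩ := ht
      -- split the sum
      have hsplit : Finset.Ioo lo hi = Finset.Ioo lo t ∪ Finset.Ico t hi := by
        ext x; simp [Finset.mem_Ioo, Finset.mem_union, Finset.mem_Ico]; omega
      have hdisj : Disjoint (Finset.Ioo lo t) (Finset.Ico t hi) := by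
        rw [Finset.disjoint_left]; intro x hx hx'
        simp [Finset.mem_Ioo] at hx; simp [Finset.mem_Ico] at hx'; omega
      have hins : Finset.Ico t hi = insert t (Finset.Ioo t hi) := by
        ext x; simp [Finset.mem_Ico, Finset.mem_Ioo]; omega
      have hsum : ∑ i ∈ Finset.Ioo lo hi, r i
          = ∑ i ∈ Finset.Ioo lo t, r i + (r t + ∑ i ∈ Finset.Ioo t hi, r i) := by
        rw [hsplit, Finset.sum_union hdisj, hins,
          Finset.sum_insert (by simp [Finset.mem_Ioo])]
      -- max gives strict bounds
      have hflt : ∀ i, lo < i → i < hi → i ≠ t → f i < f t := by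
        intro i hi1 hi2 hne
        have hle := htmax i (by simp [Finset.mem_Ioo]; omega)
        rcases lt_or_eq_of_le hle with h | h
        · exact h
        · exact absurd (hinj (by simp; omega) (by simp; omega) h) hne
      -- left interval
      have hL : ∑ i ∈ Finset.Ioo lo t, r i ≤ a (t - lo - 1) := by
        apply ih (t - lo - 1) (by omega) lo t (by omega) f r
          (hinj.mono (by intro x hx; simp at hx ⊢; omega))
        · intro i hi1 hi2; exact h1 i hi1 (by omega)
        · intro i hi1 hi2
          have := h3 i t hi1 (by omega) hlt hth (hflt i hi1 (by omega) (by omega))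
          rwa [Nat.dist_eq_sub_of_le (by omega)] at this
        · intro i j hi1 hi2 hj1 hj2 hfij
          exact h3 i j hi1 (by omega) hj1 (by omega) hfij
      -- right interval
      have hR : ∑ i ∈ Finset.Ioo t hi, r i ≤ a (hi - t - 1) := by
        apply ih (hi - t - 1) (by omega) t hi (by omega) f r
          (hinj.mono (by intro x hx; simp at hx ⊢; omega))
        · intro i hi1 hi2
          have := h3 i t (by omega) hi2 hlt hth (hflt i (by omega) hi2 (by omega))
          rwa [Nat.dist_comm, Nat.dist_eq_sub_of_le (by omega)] at this
        · intro i hi1 hi2; exact h2 i (by omega) hi2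
        · intro i j hi1 hi2 hj1 hj2 hfij
          exact h3 i j (by omega) hi2 (by omega) hj2 hfij
      have hrt1 := h1 t hlt hth
      have hrt2 := h2 t hlt hth
      rcases le_total (t - lo) (hi - t) with hc | hc
      · have hmem : t - lo ∈ Finset.Icc 1 ((p + 1) / 2) := by
          simp [Finset.mem_Icc]; omega
        have hle := Finset.le_sup (f := fun k => k + a (k - 1) + a (p - k)) hmem
        rw [← harec p (by omega)] at hle
        have e1 : hi - t - 1 = p - (t - lo) := by omega
        rw [hsum]; rw [e1] at hR; omega
      · have hmem : hi - t ∈ Finset.Icc 1 ((p + 1) / 2) := by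
          simp [Finset.mem_Icc]; omega
        have hle := Finset.le_sup (f := fun k => k + a (k - 1) + a (p - k)) hmem
        rw [← harec p (by omega)] at hle
        have e1 : t - lo - 1 = p - (hi - t) := by omega
        rw [hsum]; rw [e1] at hL; omega

lemma sum_runtime_le (a : ℕ → ℕ) (ha1 : a 1 = 1)
    (harec : ∀ p, 2 ≤ p →
      a p = (Finset.Icc 1 ((p + 1) / 2)).sup (fun k => k + a (k - 1) + a (p - k)))
    (n : ℕ) (hn : 3 ≤ n) (I : Fin n → ℕ) (hI : Function.Injective I) :
    ∑ v : Fin n, cycleRuntime n I v ≤ (n + 1) / 2 + a (n - 1) := by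
  haveI : NeZero n := ⟨by omega⟩
  have hn2 : 2 ≤ n := by omega
  obtain ⟨t, -, htmax⟩ := Finset.exists_max_image Finset.univ I ⟨0, Finset.mem_univ 0⟩
  have hub : ∀ (v u : Fin n) (m : ℕ), (SimpleGraph.cycleGraph n).dist v u ≤ m →
      I v < I u → cycleRuntime n I v ≤ m :=
    fun v u m hd hlt => Nat.sInf_le (Or.inl ⟨u, hd, hlt⟩)
  set r : ℕ → ℕ := fun i => cycleRuntime n I (t + (i : Fin n)) with hr
  set f : ℕ → ℕ := fun i => I (t + (i : Fin n)) with hf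
  -- strict max
  have hstrict : ∀ i : ℕ, 0 < i → i < n → I (t + (i : Fin n)) < I t := by
    intro i h0 h1
    have hne : t + (i : Fin n) ≠ t := by
      intro h
      have : (i : Fin n) = 0 := by
        have := congrArg (· - t) h; simpa using this
      rw [Fin.ext_iff, Fin.val_cast_of_lt h1] at this
      simp at this; omega
    have hle := htmax (t + (i : Fin n)) (Finset.mem_univ _)
    rcases lt_or_eq_of_le hle with h | h
    · exact h
    · exact absurd (hI h) hne
  have hcast : ∀ i : ℕ, i ≤ n → ((n - i : ℕ) : Fin n) = -(i : Fin n) := by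
    intro i hi
    rw [Nat.cast_sub hi]
    simp [Fin.natCast_self]
  -- h1 : r i ≤ i
  have h1 : ∀ i, 0 < i → i < n → r i ≤ i - 0 := by
    intro i h0 h1
    apply hub _ t _ _ (hstrict i h0 h1)
    rw [SimpleGraph.dist_comm]
    simpa using cyc_dist_add_le n hn2 t i
  -- h2 : r i ≤ n - i
  have h2 : ∀ i, 0 < i → i < n → r i ≤ n - i := by
    intro i h0 hiltn
    apply hub _ t _ _ (hstrict i h0 hiltn)
    have := cyc_dist_add_le n hn2 (t + (i : Fin n)) (n - i)
    rwa [hcast i (le_of_lt hiltn), add_assoc, add_neg_cancel, add_zero] at this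
  -- h3
  have h3 : ∀ i j, 0 < i → i < n → 0 < j → j < n → f i < f j → r i ≤ Nat.dist i j := by
    intro i j hi0 hin hj0 hjn hij
    rcases le_total i j with h | h
    · apply hub _ (t + (j : Fin n)) _ _ hij
      have := cyc_dist_add_le n hn2 (t + (i : Fin n)) (j - i)
      rw [Nat.cast_sub h] at this
      rw [Nat.dist_eq_sub_of_le h]
      have e : t + (i : Fin n) + ((j : Fin n) - (i : Fin n)) = t + (j : Fin n) := by ring
      rwa [e] at this
    · apply hub _ (t + (j : Fin n)) _ _ hij
      have := cyc_dist_add_le n hn2 (t + (j : Fin n)) (i - j)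
      rw [Nat.cast_sub h] at this
      rw [Nat.dist_comm, Nat.dist_eq_sub_of_le h]
      have e : t + (j : Fin n) + ((i : Fin n) - (j : Fin n)) = t + (i : Fin n) := by ring
      rwa [e, SimpleGraph.dist_comm] at this
  -- injectivity of f on Ioo 0 n
  have hinj : Set.InjOn f (Set.Ioo 0 n) := by
    intro i hi j hj h
    have := hI h
    have : (i : Fin n) = (j : Fin n) := by
      have := congrArg (· - t) this; simpa [add_comm] using this
    rw [Fin.ext_iff, Fin.val_cast_of_lt hi.2, Fin.val_cast_of_lt hj.2] at this
    exact this
  -- rewrite sum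
  have hsum1 : ∑ v : Fin n, cycleRuntime n I v = ∑ i ∈ Finset.range n, r i := by
    rw [← Fin.sum_univ_eq_sum_range r n]
    refine Fintype.sum_equiv (Equiv.addLeft t).symm _ _ (fun v => ?_)
    simp [hr, Fin.cast_val_eq_self]
  have hsplit : Finset.range n = insert 0 (Finset.Ioo 0 n) := by
    ext x; simp [Finset.mem_range, Finset.mem_Ioo]; omega
  have hr0 : r 0 ≤ (n + 1) / 2 := by
    have : r 0 = cycleRuntime n I t := by simp [hr]
    rw [this]
    exact Nat.sInf_le (Or.inr le_rfl)
  have hIoo : ∑ i ∈ Finset.Ioo 0 n, r i ≤ a (n - 1) :=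
    path_sum a ha1 harec (n - 1) 0 n (by omega) f r hinj h1 h2 h3
  rw [hsum1, hsplit, Finset.sum_insert (by simp)]
  omega

/-- The recurrence `a` grows at most like `2 p log₂ (p+1)`. -/
lemma a_growth (a : ℕ → ℕ) (ha0 : a 0 = 0) (ha1 : a 1 = 1)
    (harec : ∀ p, 2 ≤ p →
      a p = (Finset.Icc 1 ((p + 1) / 2)).sup (fun k => k + a (k - 1) + a (p - k))) :
    ∀ p, 1 ≤ p → (a p : ℝ) ≤ 2 * p * Real.logb 2 (p + 1) := by
  intro p
  induction p using Nat.strong_induction_on with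
  | _ p ih =>
    intro hp1
    rcases eq_or_lt_of_le hp1 with h1 | hp2
    · rw [← h1, ha1]
      have : Real.logb 2 2 = 1 := Real.logb_self_eq_one (by norm_num)
      norm_num [this]
    · -- p ≥ 2
      have hp2' : 2 ≤ p := hp2
      obtain ⟨k, hk, hsup⟩ := Finset.exists_mem_eq_sup (Finset.Icc 1 ((p + 1) / 2))
        ⟨1, by simp [Finset.mem_Icc]; omega⟩ (fun k => k + a (k - 1) + a (p - k))
      rw [Finset.mem_Icc] at hk
      have hk1 : 1 ≤ k := hk.1
      have hk2 : 2 * k ≤ p + 1 := by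
        have := hk.2; omega
      have hpk1 : 1 ≤ p - k := by omega
      have hpklt : p - k < p := by omega
      rw [harec p hp2', hsup]
      set L : ℝ := Real.logb 2 (p + 1) with hL
      have hL1 : 1 ≤ L := by
        have h2 : (2:ℝ) ≤ (p:ℝ) + 1 := by
          have : (2:ℝ) ≤ (p:ℝ) := by exact_mod_cast hp2'
          linarith
        have := Real.logb_le_logb_of_le (b := 2) (by norm_num) (by norm_num) h2
        simpa [Real.logb_self_eq_one (b := 2) (by norm_num)] using this
      have hak1 : (a (k - 1) : ℝ) ≤ 2 * ((k:ℝ) - 1) * Real.logb 2 k := by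
        rcases eq_or_lt_of_le hk1 with h | h
        · rw [← h]; simp [ha0]
        · have hk2' : 2 ≤ k := h
          have := ih (k - 1) (by omega) (by omega)
          have e : ((k - 1 : ℕ) : ℝ) = (k:ℝ) - 1 := by
            push_cast [Nat.cast_sub hk1]; ring
          have e2 : (k:ℝ) - 1 + 1 = (k:ℝ) := by ring
          rw [e, e2] at this
          exact this
      have hapk : (a (p - k) : ℝ) ≤ 2 * ((p:ℝ) - (k:ℝ)) * Real.logb 2 ((p:ℝ) - (k:ℝ) + 1) := by
        have := ih (p - k) hpklt hpk1
        have e : ((p - k : ℕ) : ℝ) = (p:ℝ) - (k:ℝ)  := by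
          push_cast [Nat.cast_sub (by omega : k ≤ p)]; ring
        rw [e] at this
        exact this
      have hlogk : Real.logb 2 k ≤ L - 1 := by
        have h2k : Real.logb 2 (2 * k) ≤ L := by
          apply Real.logb_le_logb_of_le (by norm_num) (by positivity)
          exact_mod_cast hk2
        rw [Real.logb_mul (by norm_num) (by positivity),
          Real.logb_self_eq_one (by norm_num)] at h2k
        linarith
      have hlogpk : Real.logb 2 ((p:ℝ) - (k:ℝ) + 1) ≤ L := by
        apply Real.logb_le_logb_of_le (by norm_num)
        · have : (1:ℝ) ≤ (p:ℝ) - (k:ℝ) := by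
            have : (k:ℝ) + 1 ≤ (p:ℝ) := by exact_mod_cast (by omega : k + 1 ≤ p)
            linarith
          linarith
        · have : (k:ℝ) ≥ 0 := by positivity
          linarith
      have hlogk0 : 0 ≤ Real.logb 2 k := Real.logb_nonneg (by norm_num) (by exact_mod_cast hk1)
      have hkR : (1:ℝ) ≤ (k:ℝ) := by exact_mod_cast hk1
      have hpkR : (1:ℝ) ≤ (p:ℝ) - (k:ℝ) := by
        have : (k:ℝ) + 1 ≤ (p:ℝ) := by exact_mod_cast (by omega : k + 1 ≤ p)
        linarith
      have t1 : 2 * ((k:ℝ) - 1) * Real.logb 2 k ≤ 2 * ((k:ℝ) - 1) * (L - 1) :=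
        mul_le_mul_of_nonneg_left hlogk (by linarith)
      have t2 : 2 * ((p:ℝ) - (k:ℝ)) * Real.logb 2 ((p:ℝ) - (k:ℝ) + 1)
          ≤ 2 * ((p:ℝ) - (k:ℝ)) * L :=
        mul_le_mul_of_nonneg_left hlogpk (by linarith)
      have key : (↑(k + a (k - 1) + a (p - k)) : ℝ)
          ≤ (k:ℝ) + 2 * ((k:ℝ) - 1) * (L - 1) + 2 * ((p:ℝ) - (k:ℝ)) * L := by
        push_cast
        linarith
      refine le_trans key ?_
      nlinarith [hL1, hkR]

/-- For the grow-until-dominated leader election algorithm on an `n`-node cycle with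
distinct identifiers, the sum of all running times is at most `⌈n/2⌉ + a (n-1)` where
`a` satisfies the recurrence `a p = max_{1 ≤ k ≤ ⌈p/2⌉} (k + a (k-1) + a (p-k))`,
`a 0 = 0`, `a 1 = 1`; since `a m = O(m log m)`, the node-averaged running time is
`O(log n)`. -/
theorem stmt_14 (a : ℕ → ℕ) (ha0 : a 0 = 0) (ha1 : a 1 = 1)
    (harec : ∀ p, 2 ≤ p →
      a p = (Finset.Icc 1 ((p + 1) / 2)).sup (fun k => k + a (k - 1) + a (p - k))) :
    (∀ n : ℕ, 3 ≤ n → ∀ I : Fin n → ℕ, Function.Injective I →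
      ∑ v : Fin n, cycleRuntime n I v ≤ (n + 1) / 2 + a (n - 1)) ∧
    (∃ C : ℝ, 0 < C ∧ ∀ n : ℕ, 3 ≤ n → ∀ I : Fin n → ℕ, Function.Injective I →
      (1 / (n : ℝ)) * ∑ v : Fin n, (cycleRuntime n I v : ℝ) ≤ C * Real.log n) := by
  have hlog2 : 0 < Real.log 2 := Real.log_pos one_lt_two
  refine ⟨fun n hn I hI => sum_runtime_le a ha1 harec n hn I hI, 
    ⟨1 + 2 / Real.log 2, by positivity, ?_⟩⟩
  intro n hn I hI
  have hn0 : (0:ℝ) < n := by positivity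
  have hnR : (3:ℝ) ≤ (n:ℝ) := by exact_mod_cast hn
  -- real-valued sum bound
  have hsumN := sum_runtime_le a ha1 harec n hn I hI
  have hS : ∑ v : Fin n, (cycleRuntime n I v : ℝ)
      = ((∑ v : Fin n, cycleRuntime n I v : ℕ) : ℝ) := by push_cast; rfl
  have hhalf : (((n + 1) / 2 : ℕ) : ℝ) ≤ (n:ℝ) := by
    have : (n + 1) / 2 ≤ n := by omega
    exact_mod_cast this
  have hlogbn0 : 0 ≤ Real.logb 2 n := Real.logb_nonneg (by norm_num) (by linarith)
  have han : ((a (n - 1) : ℕ) : ℝ) ≤ 2 * (n:ℝ) * Real.logb 2 n := by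
    have := a_growth a ha0 ha1 harec (n - 1) (by omega)
    have e : ((n - 1 : ℕ) : ℝ) = (n:ℝ) - 1 := by
      push_cast [Nat.cast_sub (by omega : 1 ≤ n)]; ring
    have e2 : (n:ℝ) - 1 + 1 = (n:ℝ) := by ring
    rw [e, e2] at this
    refine le_trans this ?_
    have : (n:ℝ) - 1 ≤ (n:ℝ) := by linarith
    nlinarith [hlogbn0]
  have hSbound : ∑ v : Fin n, (cycleRuntime n I v : ℝ)
      ≤ (n:ℝ) * (1 + 2 * Real.logb 2 n) := by
    rw [hS]
    have : ((∑ v : Fin n, cycleRuntime n I v : ℕ) : ℝ)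
        ≤ (((n + 1) / 2 : ℕ) : ℝ) + ((a (n - 1) : ℕ) : ℝ) := by
      push_cast
      exact_mod_cast hsumN
    refine le_trans this ?_
    have expand : (n:ℝ) * (1 + 2 * Real.logb 2 n) = (n:ℝ) + 2 * (n:ℝ) * Real.logb 2 n := by ring
    rw [expand]
    linarith
  have hdiv : (1 / (n:ℝ)) * ∑ v : Fin n, (cycleRuntime n I v : ℝ)
      ≤ 1 + 2 * Real.logb 2 n := by
    have := mul_le_mul_of_nonneg_left hSbound (by positivity : (0:ℝ) ≤ 1 / (n:ℝ))
    refine le_trans this ?_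
    rw [one_div, inv_mul_cancel_left₀ (ne_of_gt hn0)]
  refine le_trans hdiv ?_
  -- 1 + 2 logb 2 n ≤ (1 + 2/log 2) * log n
  have hlogn : 1 ≤ Real.log n := by
    have hexp : Real.exp 1 < (n:ℝ) := lt_of_lt_of_le
      (lt_trans Real.exp_one_lt_d9 (by norm_num)) hnR
    have := (Real.lt_log_iff_exp_lt hn0).mpr hexp
    linarith
  have hlb : Real.logb 2 n = Real.log n / Real.log 2 := rfl
  rw [hlb]
  have expand : (1 + 2 / Real.log 2) * Real.log n
      = Real.log n + 2 * (Real.log n / Real.log 2) := by ring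
  rw [expand]
  linarith
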